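/- For every natural number n and every point x₀ ∈ ℝ² there exist a natural number λ, a finite set I ⊆ {k = (k₁,k₂) ∈ ℤ² : k₁² + k₂² = λ}, and coefficients μ : I → ℂ, not all zero, such that the function u(x) = ∑_{k ∈ I} μ(k) · exp(i(k₁x₁ + k₂x₂)) satisfies: (a) u is 2π-periodic in each variable, (b) Δu = −λ·u on ℝ², i.e., u is an eigenfunction of the Laplacian on the flat torus with eigenvalue λ, and (c) all iterated derivatives of u of order at most n vanish at x₀, i.e., u vanishes at x₀ to order at least n. -/

import Mathlib

open Complex

noncomputable section

/-- First partial derivative of a complex-valued function on `ℝ²`. -/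
def pd1C (f : ℝ × ℝ → ℂ) : ℝ × ℝ → ℂ := fun x => fderiv ℝ f x (1, 0)

/-- Second partial derivative of a complex-valued function on `ℝ²`. -/
def pd2C (f : ℝ × ℝ → ℂ) : ℝ × ℝ → ℂ := fun x => fderiv ℝ f x (0, 1)

/-- The Laplacian `Δu = ∂²u/∂x₁² + ∂²u/∂x₂²` of a complex-valued function on `ℝ²`. -/
def lapC (f : ℝ × ℝ → ℂ) : ℝ × ℝ → ℂ := fun x => pd1C (pd1C f) x + pd2C (pd2C f) x

/-- `2π`-periodicity of a complex-valued function on `ℝ²`. -/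
def Periodic2C (u : ℝ × ℝ → ℂ) : Prop :=
  ∀ (x : ℝ × ℝ) (k : ℤ × ℤ), u (x.1 + 2 * Real.pi * k.1, x.2 + 2 * Real.pi * k.2) = u x

open Finset

instance : Fact (Nat.Prime 5) := ⟨by norm_num⟩

def gA : GaussianInt := ⟨2, 1⟩
def gB : GaussianInt := ⟨2, -1⟩

def phi5 : GaussianInt →+* ZMod 5 := Zsqrtd.lift ⟨2, by decide⟩

lemma phi5_gA : phi5 gA = 4 := by decide
lemma phi5_gB : phi5 gB = 0 := by decide

lemma norm_gA : gA.norm = 5 := by decide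
lemma norm_gB : gB.norm = 5 := by decide

lemma pow_ne (t : ℕ) (ht : 0 < t) : gB ^ t ≠ gA ^ t := by
  intro h
  have h2 := congrArg phi5 h
  rw [map_pow, map_pow, phi5_gA, phi5_gB, zero_pow ht.ne'] at h2
  have : (4 : ZMod 5) ^ t ≠ 0 := pow_ne_zero t (by decide)
  exact this h2.symm

def zG (M a : ℕ) : GaussianInt := gA ^ a * gB ^ (M - a)

lemma cancel_key {a c t : ℕ} (h : gA ^ a * gB ^ c * gB ^ t = gA ^ a * gB ^ c * gA ^ t) :
    gB ^ t = gA ^ t := by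
  have hA0 : (gA : GaussianInt) ^ a ≠ 0 := pow_ne_zero _ (by decide)
  have hB0 : (gB : GaussianInt) ^ c ≠ 0 := pow_ne_zero _ (by decide)
  exact mul_left_cancel₀ (mul_ne_zero hA0 hB0) h

lemma zG_inj (M : ℕ) {a b : ℕ} (ha : a ≤ M) (hb : b ≤ M) (h : zG M a = zG M b) : a = b := by
  rcases lt_trichotomy a b with hab | hab | hab
  · exfalso
    have hb' : b = a + (b - a) := by omega
    have hMa : M - a = (M - b) + (b - a) := by omega
    rw [zG, zG, hb', hMa, pow_add, pow_add] at h
    rw [show M - (a + (b - a)) = M - b by omega] at h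
    refine pow_ne (b - a) (by omega) (cancel_key (a := a) (c := M - b) ?_)
    linear_combination h
  · exact hab
  · exfalso
    have ha' : a = b + (a - b) := by omega
    have hMb : M - b = (M - a) + (a - b) := by omega
    rw [zG, zG, ha', hMb, pow_add, pow_add] at h
    rw [show M - (b + (a - b)) = M - a by omega] at h
    refine pow_ne (a - b) (by omega) (cancel_key (a := b) (c := M - a) ?_)
    linear_combination -h

lemma zG_norm (M a : ℕ) (ha : a ≤ M) : (zG M a).norm = 5 ^ M := by
  have : (zG M a).norm = Zsqrtd.normMonoidHom (zG M a) := rfl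
  rw [this, zG, map_mul, map_pow, map_pow]
  show gA.norm ^ a * gB.norm ^ (M - a) = 5 ^ M
  rw [norm_gA, norm_gB, ← pow_add]
  congr 1; omega

lemma zG_sq (M a : ℕ) (ha : a ≤ M) : (zG M a).re ^ 2 + (zG M a).im ^ 2 = (5:ℤ) ^ M := by
  have h := zG_norm M a ha
  rw [Zsqrtd.norm] at h
  nlinarith [h]

/-- The linear functional `v ↦ I*(k₁ v₁ + k₂ v₂)`. -/
def lin (k : ℤ × ℤ) : (ℝ × ℝ) →L[ℝ] ℂ :=
  (Complex.I * (k.1 : ℂ)) • ((Complex.ofRealCLM).comp (ContinuousLinearMap.fst ℝ ℝ ℝ)) +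
  (Complex.I * (k.2 : ℂ)) • ((Complex.ofRealCLM).comp (ContinuousLinearMap.snd ℝ ℝ ℝ))

lemma lin_apply (k : ℤ × ℤ) (v : ℝ × ℝ) :
    lin k v = Complex.I * (k.1 : ℂ) * (v.1 : ℂ) + Complex.I * (k.2 : ℂ) * (v.2 : ℂ) := by
  simp [lin]

lemma hasFDerivAt_exp_lin (k : ℤ × ℤ) (x : ℝ × ℝ) :
    HasFDerivAt (fun x => Complex.exp (lin k x)) (Complex.exp (lin k x) • lin k) x :=
  ((lin k).hasFDerivAt).cexp

/-- `(v₁,…,v_j) ↦ ∏ i, lin k (v i)` as a continuous multilinear map. -/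
def PM (j : ℕ) (k : ℤ × ℤ) : ContinuousMultilinearMap ℝ (fun _ : Fin j => ℝ × ℝ) ℂ :=
  (ContinuousMultilinearMap.mkPiAlgebraFin ℝ j ℂ).compContinuousLinearMap (fun _ => lin k)

lemma PM_apply (j : ℕ) (k : ℤ × ℤ) (v : Fin j → ℝ × ℝ) :
    PM j k v = ∏ i, lin k (v i) := by
  simp [PM, ContinuousMultilinearMap.compContinuousLinearMap_apply,
    ContinuousMultilinearMap.mkPiAlgebraFin_apply, List.prod_ofFn]

lemma hasFDerivAt_term (c : ℂ) (k : ℤ × ℤ) (j : ℕ) (x : ℝ × ℝ) :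
    HasFDerivAt (fun x => (c * Complex.exp (lin k x)) • PM j k)
      (((c * Complex.exp (lin k x)) • lin k).smulRight (PM j k)) x := by
  have h1 : HasFDerivAt (fun x => c * Complex.exp (lin k x))
      ((c * Complex.exp (lin k x)) • lin k) x := by
    have := (hasFDerivAt_exp_lin k x).const_mul c
    simpa [smul_smul] using this
  exact h1.smul_const (PM j k)

lemma iter_formula (S : Finset (ℤ × ℤ)) (c : ℤ × ℤ → ℂ) (j : ℕ) :
    iteratedFDeriv ℝ j (fun x => ∑ k ∈ S, c k * Complex.exp (lin k x)) =
      fun x => ∑ k ∈ S, (c k * Complex.exp (lin k x)) • PM j k := by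
  induction j with
  | zero =>
    funext x; ext v
    simp [iteratedFDeriv_zero_apply, PM_apply]
  | succ j ih =>
    funext x
    ext v
    rw [iteratedFDeriv_succ_apply_left, ih]
    have hD : HasFDerivAt (fun x => ∑ k ∈ S, (c k * Complex.exp (lin k x)) • PM j k)
        (∑ k ∈ S, ((c k * Complex.exp (lin k x)) • lin k).smulRight (PM j k)) x :=
      HasFDerivAt.fun_sum (fun k _ => hasFDerivAt_term (c k) k j x)
    rw [hD.fderiv]
    simp only [ContinuousLinearMap.coe_sum', Finset.sum_apply,
      ContinuousMultilinearMap.sum_apply, ContinuousLinearMap.smulRight_apply,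
      ContinuousLinearMap.coe_smul', Pi.smul_apply, ContinuousMultilinearMap.smul_apply,
      PM_apply, smul_eq_mul]
    refine Finset.sum_congr rfl (fun k _ => ?_)
    rw [Fin.prod_univ_succ]
    simp [Fin.tail]
    ring


lemma fderiv_formula (S : Finset (ℤ × ℤ)) (c : ℤ × ℤ → ℂ) (x : ℝ × ℝ) :
    fderiv ℝ (fun x => ∑ k ∈ S, c k * Complex.exp (lin k x)) x =
      ∑ k ∈ S, (c k * Complex.exp (lin k x)) • lin k := by
  have hD : HasFDerivAt (fun x => ∑ k ∈ S, c k * Complex.exp (lin k x))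
      (∑ k ∈ S, (c k * Complex.exp (lin k x)) • lin k) x := by
    refine HasFDerivAt.fun_sum (fun k _ => ?_)
    have := (hasFDerivAt_exp_lin k x).const_mul (c k)
    simpa [smul_smul] using this
  exact hD.fderiv

lemma pd1_formula (S : Finset (ℤ × ℤ)) (c : ℤ × ℤ → ℂ) :
    pd1C (fun x => ∑ k ∈ S, c k * Complex.exp (lin k x)) =
      fun x => ∑ k ∈ S, (c k * (Complex.I * (k.1 : ℂ))) * Complex.exp (lin k x) := by
  funext x
  rw [pd1C, fderiv_formula]
  simp only [ContinuousLinearMap.coe_sum', Finset.sum_apply, ContinuousLinearMap.coe_smul',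
    Pi.smul_apply, smul_eq_mul]
  refine Finset.sum_congr rfl (fun k _ => ?_)
  rw [show (lin k) (1, 0) = Complex.I * (k.1 : ℂ) by rw [lin_apply]; norm_num]
  ring

lemma pd2_formula (S : Finset (ℤ × ℤ)) (c : ℤ × ℤ → ℂ) :
    pd2C (fun x => ∑ k ∈ S, c k * Complex.exp (lin k x)) =
      fun x => ∑ k ∈ S, (c k * (Complex.I * (k.2 : ℂ))) * Complex.exp (lin k x) := by
  funext x
  rw [pd2C, fderiv_formula]
  simp only [ContinuousLinearMap.coe_sum', Finset.sum_apply, ContinuousLinearMap.coe_smul',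
    Pi.smul_apply, smul_eq_mul]
  refine Finset.sum_congr rfl (fun k _ => ?_)
  rw [show (lin k) (0, 1) = Complex.I * (k.2 : ℂ) by rw [lin_apply]; norm_num]
  ring

def Jset (n : ℕ) : Finset (ℕ × ℕ) :=
  (Finset.range (n+1) ×ˢ Finset.range (n+1)).filter (fun p => p.1 + p.2 ≤ n)

lemma mem_Jset {n : ℕ} {p : ℕ × ℕ} : p ∈ Jset n ↔ p.1 + p.2 ≤ n := by
  simp only [Jset, Finset.mem_filter, Finset.mem_product, Finset.mem_range]
  omega

lemma exists_kernel (n : ℕ) (w : Fin ((Jset n).card + 1) → (ℕ × ℕ) → ℂ) :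
    ∃ ν : Fin ((Jset n).card + 1) → ℂ, ν ≠ 0 ∧ ∀ p ∈ Jset n, ∑ a, ν a * w a p = 0 := by
  classical
  let Φ : (Fin ((Jset n).card + 1) → ℂ) →ₗ[ℂ] ({p : ℕ × ℕ // p ∈ Jset n} → ℂ) :=
    { toFun := fun ν p => ∑ a, ν a * w a p
      map_add' := by
        intro ν₁ ν₂; funext p
        simp [add_mul, Finset.sum_add_distrib]
      map_smul' := by
        intro r ν; funext p
        simp [Finset.mul_sum, mul_assoc] }
  have hninj : ¬ Function.Injective Φ := by
    intro hinj
    have h1 := LinearMap.finrank_le_finrank_of_injective hinj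
    rw [Module.finrank_fintype_fun_eq_card, Module.finrank_fintype_fun_eq_card,
      Fintype.card_fin, Fintype.card_coe] at h1
    omega
  rw [Function.not_injective_iff] at hninj
  obtain ⟨ν₁, ν₂, hval, hne⟩ := hninj
  refine ⟨ν₁ - ν₂, sub_ne_zero_of_ne hne, fun p hp => ?_⟩
  have : Φ (ν₁ - ν₂) = 0 := by rw [map_sub, hval, sub_self]
  have h2 := congrFun this ⟨p, hp⟩
  simpa [Φ, sub_mul, Finset.sum_sub_distrib] using h2


theorem eigenfunction_with_high_vanishing_order (n : ℕ) (x₀ : ℝ × ℝ) :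
    ∃ (lam : ℕ) (I : Finset (ℤ × ℤ)) (μ : ℤ × ℤ → ℂ),
      (∀ k ∈ I, k.1 ^ 2 + k.2 ^ 2 = (lam : ℤ)) ∧
      (∃ k ∈ I, μ k ≠ 0) ∧
      (fun u : ℝ × ℝ → ℂ =>
          Periodic2C u ∧
          (∀ x, lapC u x = -(lam : ℂ) * u x) ∧
          (∀ j : ℕ, j ≤ n → iteratedFDeriv ℝ j u x₀ = 0))
        (fun x => ∑ k ∈ I,
          μ k * Complex.exp (Complex.I * ((k.1 : ℂ) * (x.1 : ℂ) + (k.2 : ℂ) * (x.2 : ℂ)))) := by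
  classical
  set N := (Jset n).card with hNdef
  set K : Fin (N + 1) → ℤ × ℤ := fun a => ((zG N a).re, (zG N a).im) with hKdef
  have Kinj : Function.Injective K := by
    intro a b h
    have h1 : zG N a = zG N b := by
      have e1 := congrArg Prod.fst h
      have e2 := congrArg Prod.snd h
      exact Zsqrtd.ext e1 e2
    exact Fin.ext (zG_inj N (Nat.lt_succ_iff.mp a.isLt) (Nat.lt_succ_iff.mp b.isLt) h1)
  obtain ⟨ν, hν0, hker⟩ := exists_kernel n (fun a p => ((K a).1 : ℂ) ^ p.1 * ((K a).2 : ℂ) ^ p.2)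
  set I : Finset (ℤ × ℤ) := Finset.image K Finset.univ with hIdef
  set μ : ℤ × ℤ → ℂ := fun k => (∑ a, if K a = k then ν a else 0) *
      Complex.exp (-(Complex.I * ((k.1 : ℂ) * (x₀.1 : ℂ) + (k.2 : ℂ) * (x₀.2 : ℂ)))) with hμdef
  have hμK : ∀ a, μ (K a) = ν a *
      Complex.exp (-(Complex.I * (((K a).1 : ℂ) * (x₀.1 : ℂ) + ((K a).2 : ℂ) * (x₀.2 : ℂ)))) := by
    intro a
    simp only [hμdef]
    congr 1
    rw [Finset.sum_eq_single a (fun b _ hb => if_neg (fun hKb => hb (Kinj hKb)))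
      (fun h => absurd (Finset.mem_univ a) h)]
    simp
  have hμexp : ∀ a, μ (K a) * Complex.exp (lin (K a) x₀) = ν a := by
    intro a
    rw [hμK a, lin_apply, mul_assoc, ← Complex.exp_add,
      show -(Complex.I * (((K a).1 : ℂ) * (x₀.1 : ℂ) + ((K a).2 : ℂ) * (x₀.2 : ℂ))) +
        (Complex.I * ((K a).1 : ℂ) * (x₀.1 : ℂ) + Complex.I * ((K a).2 : ℂ) * (x₀.2 : ℂ)) = 0
        by ring, Complex.exp_zero, mul_one]
  have hsq : ∀ a, ((K a).1) ^ 2 + ((K a).2) ^ 2 = ((5 ^ N : ℕ) : ℤ) := by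
    intro a
    have h := zG_sq N a (Nat.lt_succ_iff.mp a.isLt)
    push_cast
    exact h
  refine ⟨5 ^ N, I, μ, ?_, ?_, ?_, ?_, ?_⟩
  · intro k hk
    obtain ⟨a, -, rfl⟩ := Finset.mem_image.mp hk
    exact hsq a
  · obtain ⟨a, ha⟩ := Function.ne_iff.mp hν0
    refine ⟨K a, Finset.mem_image_of_mem _ (Finset.mem_univ a), ?_⟩
    rw [hμK a]
    exact mul_ne_zero ha (Complex.exp_ne_zero _)
  all_goals {
    have hu : (fun x : ℝ × ℝ => ∑ k ∈ I,
        μ k * Complex.exp (Complex.I * ((k.1 : ℂ) * (x.1 : ℂ) + (k.2 : ℂ) * (x.2 : ℂ)))) =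
        fun x => ∑ k ∈ I, μ k * Complex.exp (lin k x) := by
      funext x
      refine Finset.sum_congr rfl fun k _ => ?_
      rw [lin_apply]
      ring_nf
    rw [hu]
    clear hu
    first
    | -- Periodicity
      (intro x m
       refine Finset.sum_congr rfl fun k _ => ?_
       have harg : lin k (x.1 + 2 * Real.pi * (m.1 : ℝ), x.2 + 2 * Real.pi * (m.2 : ℝ)) =
           lin k x + ((k.1 * m.1 + k.2 * m.2 : ℤ) : ℂ) * (2 * Real.pi * Complex.I) := by
         rw [lin_apply, lin_apply]
         push_cast
         ring
       rw [harg, Complex.exp_add, Complex.exp_int_mul_two_pi_mul_I, mul_one])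
    | -- Laplacian
      (intro x
       rw [lapC, pd1_formula, pd1_formula, pd2_formula, pd2_formula]
       simp only []
       rw [← Finset.sum_add_distrib, Finset.mul_sum]
       refine Finset.sum_congr rfl fun k hk => ?_
       obtain ⟨a, -, rfl⟩ := Finset.mem_image.mp hk
       have hk2 : (((K a).1 : ℂ)) ^ 2 + (((K a).2 : ℂ)) ^ 2 = ((5 : ℂ)) ^ N := by
         have h := hsq a
         have h2 := congrArg (Int.cast : ℤ → ℂ) h
         push_cast at h2
         exact h2
       push_cast
       linear_combination (μ (K a) * Complex.exp (lin (K a) x)) *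
           ((((K a).1 : ℂ)) ^ 2 + (((K a).2 : ℂ)) ^ 2) * Complex.I_sq -
         (μ (K a) * Complex.exp (lin (K a) x)) * hk2)
    | -- Vanishing
      (intro j hj
       rw [iter_formula]
       ext v
       simp only [ContinuousMultilinearMap.sum_apply, ContinuousMultilinearMap.smul_apply,
         PM_apply, smul_eq_mul, ContinuousMultilinearMap.zero_apply]
       rw [hIdef, Finset.sum_image (fun a _ b _ h => Kinj h)]
       rw [Finset.sum_congr rfl (fun a _ => by rw [hμexp a] :
         ∀ a ∈ Finset.univ, μ (K a) * Complex.exp (lin (K a) x₀) * (∏ i, lin (K a) (v i)) =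
           ν a * ∏ i, lin (K a) (v i))]
       simp only [lin_apply]
       simp only [Finset.prod_add, Finset.mul_sum]
       rw [Finset.sum_comm]
       refine Finset.sum_eq_zero fun t ht => ?_
       have hts : t ⊆ Finset.univ := Finset.mem_powerset.mp ht
       have htc : t.card ≤ j := by
         simpa using Finset.card_le_card hts
       have hcard : (Finset.univ \ t).card = j - t.card := by
         rw [Finset.card_sdiff_of_subset hts]
         simp
       have key : ∀ a : Fin (N + 1), ν a *
           ((∏ i ∈ t, (Complex.I * ((K a).1 : ℂ) * ((v i).1 : ℂ))) *
            ∏ i ∈ Finset.univ \ t, (Complex.I * ((K a).2 : ℂ) * ((v i).2 : ℂ))) =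
           (Complex.I ^ j * (∏ i ∈ t, ((v i).1 : ℂ)) * ∏ i ∈ Finset.univ \ t, ((v i).2 : ℂ)) *
           (ν a * (((K a).1 : ℂ) ^ t.card * ((K a).2 : ℂ) ^ (j - t.card))) := by
         intro a
         simp only [Finset.prod_mul_distrib, Finset.prod_const]
         rw [hcard,
           show (Complex.I) ^ j = Complex.I ^ t.card * Complex.I ^ (j - t.card) by
             rw [← pow_add]; congr 1; omega]
         ring
       rw [Finset.sum_congr rfl (fun a _ => key a), ← Finset.mul_sum]
       have h0 : (∑ a, ν a * (((K a).1 : ℂ) ^ t.card * ((K a).2 : ℂ) ^ (j - t.card))) = 0 :=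
         hker (t.card, j - t.card) (mem_Jset.mpr (by omega))
       rw [h0, mul_zero])
  }

end
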